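/- Let p be a prime and let G be a torsion group such that G = AP, where P is a normal p-subgroup of G having the normalizer-increasing property and A is a p′-subgroup of G. Suppose that there exists a subgroup B ≤ C_P(A) such that [C_P(B), A] = 1. Then [A,P] = 1 and A ∩ P = 1, so that G is isomorphic to the direct product A × P via the multiplication map (a,x) ↦ ax. -/

import Mathlib

/-- A group `P` has the normalizer-increasing property if for all subgroups `X < Y` of
`P`, `X` is a proper subgroup of `N_Y(X)`. -/
def NormalizerIncreasing (P : Type*) [Group P] : Prop :=
  ∀ X Y : Subgroup P, X < Y → X < Subgroup.normalizer (X : Set P) ⊓ Y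

/-- Thompson's `A × B` Lemma, Lemma 6.4. Let `G` be a torsion group
with `G = AP`, where `P` is a normal `p`-subgroup of `G` with the normalizer-increasing
property and `A` is a `p′`-subgroup of `G`.  If there is `B ≤ C_P(A)` with
`[C_P(B), A] = 1`, then `[A, P] = 1`, `A ∩ P = 1`, and `G ≅ A × P` via `(a, x) ↦ a * x`. -/
theorem thompson_A_times_B
    {G : Type*} [Group G] (p : ℕ) (hp : p.Prime)
    (htor : ∀ g : G, IsOfFinOrder g)
    (A P : Subgroup G) (hPnormal : P.Normal) (hPp : IsPGroup p ↥P)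
    (hPni : NormalizerIncreasing ↥P)
    (hA : ∀ a ∈ A, Nat.Coprime (orderOf a) p)
    (hgen : ∀ g : G, ∃ a ∈ A, ∃ x ∈ P, g = a * x)
    (B : Subgroup G) (hB : B ≤ P ⊓ Subgroup.centralizer (A : Set G))
    (hCB : ⁅P ⊓ Subgroup.centralizer (B : Set G), A⁆ = ⊥) :
    ⁅A, P⁆ = ⊥ ∧ A ⊓ P = ⊥ ∧
      ∃ e : (↥A × ↥P) ≃* G, ∀ ax : ↥A × ↥P, e ax = (ax.1 : G) * (ax.2 : G) := by
  classical
  set D : Subgroup G := P ⊓ Subgroup.centralizer (A : Set G) with hDdef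
  have hDP : D ≤ P := inf_le_left
  -- every element of D commutes with every element of A
  have hDc : ∀ d ∈ D, ∀ a ∈ A, a * d = d * a := by
    intro d hd a ha
    exact Subgroup.mem_centralizer_iff.mp hd.2 a ha
  -- C_P(B) ≤ centralizer A
  have hcb : P ⊓ Subgroup.centralizer (B : Set G) ≤ Subgroup.centralizer (A : Set G) :=
    Subgroup.commutator_eq_bot_iff_le_centralizer.mp hCB
  -- C_P(D) ≤ D
  have hCD : P ⊓ Subgroup.centralizer (D : Set G) ≤ D := by
    refine le_inf inf_le_left (le_trans (le_trans (inf_le_inf_left P ?_) hcb) le_rfl)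
    exact Subgroup.centralizer_le (SetLike.coe_subset_coe.mpr hB)
  -- key step: any element of P normalizing D centralizes A
  have key : ∀ x ∈ P, (∀ d ∈ D, x * d * x⁻¹ ∈ D) → ∀ a ∈ A, a * x = x * a := by
    intro x hxP hxn a ha
    have hm : orderOf a ≠ 0 := by
      intro h0
      have := hA a ha
      rw [h0, Nat.coprime_zero_left] at this
      exact hp.one_lt.ne' this
    set g : G := x⁻¹ * a * x with hgdef
    -- g centralizes D
    have hgD : ∀ d ∈ D, g * d = d * g := by
      intro d hd
      have he : x * d * x⁻¹ ∈ D := hxn d hd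
      have hae : a * (x * d * x⁻¹) = (x * d * x⁻¹) * a := hDc _ he a ha
      calc g * d = x⁻¹ * (a * (x * d * x⁻¹)) * x := by rw [hgdef]; group
        _ = x⁻¹ * ((x * d * x⁻¹) * a) * x := by rw [hae]
        _ = d * g := by rw [hgdef]; group
    set c : G := a⁻¹ * g with hcdef
    have hcP : c ∈ P := by
      have h1 : a⁻¹ * x⁻¹ * (a⁻¹)⁻¹ ∈ P := hPnormal.conj_mem _ (P.inv_mem hxP) a⁻¹
      have : c = (a⁻¹ * x⁻¹ * (a⁻¹)⁻¹) * x := by rw [hcdef, hgdef]; group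
      rw [this]
      exact P.mul_mem h1 hxP
    have hcD : c ∈ D := by
      refine hCD ⟨hcP, Subgroup.mem_centralizer_iff.mpr ?_⟩
      intro d hd
      have h1 : Commute g d := hgD d hd
      have h2 : Commute a d := hDc d hd a ha
      have h3 : Commute c d := Commute.mul_left h2.inv_left h1
      exact h3.symm.eq
    have hac : a * c = c * a := hDc c hcD a ha
    have hgac : g = a * c := by rw [hcdef]; group
    -- c ^ orderOf a = 1
    have hcm : c ^ orderOf a = 1 := by
      have h1 : g ^ orderOf a = a ^ orderOf a * c ^ orderOf a := by
        have hacC : Commute a c := hac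
        rw [hgac]; exact hacC.mul_pow _
      have h2 : g ^ orderOf a = x⁻¹ * a ^ orderOf a * x := by
        have : g = (MulAut.conj x⁻¹) a := by
          simp [hgdef, MulAut.conj_apply, mul_assoc]
        rw [this, ← map_pow]
        simp [MulAut.conj_apply, mul_assoc]
      rw [pow_orderOf_eq_one a] at h1 h2
      simpa using h1.symm.trans h2
    -- c has p-power order, hence c = 1
    have hc1 : c = 1 := by
      obtain ⟨k, hk⟩ := hPp ⟨c, hcP⟩
      have hkG : c ^ (p ^ k) = 1 := by
        have := congrArg (Subtype.val) hk
        simpa using this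
      have hd1 : orderOf c ∣ p ^ k := orderOf_dvd_of_pow_eq_one hkG
      have hd2 : orderOf c ∣ orderOf a := orderOf_dvd_of_pow_eq_one hcm
      have hco : Nat.Coprime (orderOf a) (p ^ k) := (hA a ha).pow_right k
      have h1 : orderOf c = 1 := Nat.eq_one_of_dvd_coprimes hco hd2 hd1
      exact orderOf_eq_one_iff.mp h1
    -- conclude a * x = x * a
    have : x⁻¹ * a * x = a := by
      have := hgac
      rw [hc1, mul_one] at this
      exact this
    calc a * x = x * (x⁻¹ * a * x) := by group
      _ = x * a := by rw [this]
  -- P ≤ D via the normalizer-increasing property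
  have hPD : P ≤ D := by
    by_contra hcon
    have hne : D.subgroupOf P ≠ ⊤ := by
      intro htop
      apply hcon
      intro x hx
      have : (⟨x, hx⟩ : ↥P) ∈ D.subgroupOf P := htop ▸ Subgroup.mem_top _
      exact Subgroup.mem_subgroupOf.mp this
    have hlt : D.subgroupOf P < ⊤ := lt_top_iff_ne_top.mpr hne
    obtain ⟨y, hy, hyn⟩ := SetLike.exists_of_lt (hPni (D.subgroupOf P) ⊤ hlt)
    have hynorm : (y : ↥P) ∈ Subgroup.normalizer ((D.subgroupOf P : Subgroup ↥P) : Set ↥P) := hy.1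
    have hxn : ∀ d ∈ D, (y : G) * d * (y : G)⁻¹ ∈ D := by
      intro d hd
      have hdP : d ∈ P := hDP hd
      have h1 : (⟨d, hdP⟩ : ↥P) ∈ D.subgroupOf P := Subgroup.mem_subgroupOf.mpr hd
      have h2 := (Subgroup.mem_normalizer_iff.mp hynorm ⟨d, hdP⟩).mp h1
      have := Subgroup.mem_subgroupOf.mp h2
      simpa using this
    have hyD : (y : G) ∈ D := by
      refine ⟨y.2, Subgroup.mem_centralizer_iff.mpr ?_⟩
      intro a ha
      exact key (y : G) y.2 hxn a ha
    exact hyn (Subgroup.mem_subgroupOf.mpr hyD)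
  -- commuting of A and P
  have hcomm : ∀ a ∈ A, ∀ x ∈ P, a * x = x * a := fun a ha x hx => hDc x (hPD hx) a ha
  have hAPbot : A ⊓ P = ⊥ := by
    rw [eq_bot_iff]
    intro g hg
    obtain ⟨k, hk⟩ := hPp ⟨g, hg.2⟩
    have hkG : g ^ (p ^ k) = 1 := by
      have := congrArg (Subtype.val) hk
      simpa using this
    have hd1 : orderOf g ∣ p ^ k := orderOf_dvd_of_pow_eq_one hkG
    have hco : Nat.Coprime (orderOf g) (p ^ k) := (hA g hg.1).pow_right k
    have h1 : orderOf g = 1 := Nat.eq_one_of_dvd_coprimes hco dvd_rfl hd1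
    have : g = 1 := orderOf_eq_one_iff.mp h1
    simp [this]
  refine ⟨?_, hAPbot, ?_⟩
  · rw [Subgroup.commutator_eq_bot_iff_le_centralizer]
    intro a ha
    exact Subgroup.mem_centralizer_iff.mpr fun x hx => (hcomm a ha x hx).symm
  · -- build the isomorphism
    let φ : (↥A × ↥P) →* G :=
      { toFun := fun ax => (ax.1 : G) * (ax.2 : G)
        map_one' := by simp
        map_mul' := by
          rintro ⟨a₁, x₁⟩ ⟨a₂, x₂⟩
          simp only [Prod.mk_mul_mk, Subgroup.coe_mul]
          have h := hcomm (a₂ : G) a₂.2 (x₁ : G) x₁.2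
          calc ((a₁ : G) * a₂) * ((x₁ : G) * x₂)
              = (a₁ : G) * ((a₂ : G) * (x₁ : G)) * x₂ := by group
            _ = (a₁ : G) * ((x₁ : G) * (a₂ : G)) * x₂ := by rw [h]
            _ = ((a₁ : G) * x₁) * ((a₂ : G) * x₂) := by group }
    have hinj : Function.Injective φ := by
      rw [injective_iff_map_eq_one]
      rintro ⟨a, x⟩ h
      have h1 : (a : G) * (x : G) = 1 := h
      have h2 : (a : G) = (x : G)⁻¹ := by
        rw [eq_inv_iff_mul_eq_one]; exact h1
      have haP : (a : G) ∈ P := h2 ▸ P.inv_mem x.2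
      have : (a : G) ∈ A ⊓ P := ⟨a.2, haP⟩
      rw [hAPbot] at this
      have ha1 : (a : G) = 1 := this
      have hx1 : (x : G) = 1 := by
        rw [ha1, one_mul] at h1; exact h1
      ext
      · exact ha1
      · exact hx1
    have hsurj : Function.Surjective φ := by
      intro g
      obtain ⟨a, ha, x, hx, rfl⟩ := hgen g
      exact ⟨⟨⟨a, ha⟩, ⟨x, hx⟩⟩, rfl⟩
    exact ⟨MulEquiv.ofBijective φ ⟨hinj, hsurj⟩, fun ax => rfl⟩
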